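/- Monotonization lemma: let F : [0,1] → [0,∞) be continuous and strictly concave with F(0) = F(1) = 0, and let ζ ∈ (0,1) be its unique maximizer. Let s be a profile that is non-increasing on (−∞, 0) and non-increasing on (0, +∞), and define its monotonization s_monot(z) = max(s(z), ζ) for z < 0 and s_monot(z) = min(s(z), ζ) for z > 0. Then ∫_ℝ F(s(z)) dz ≤ ∫_ℝ F(s_monot(z)) dz, and ∫_ℝ (s_monot(z) − s₀(z)) z dz ≤ ∫_ℝ (s(z) − s₀(z)) z dz. -/
import Mathlib


open MeasureTheory Filter Real

noncomputable section

/-- The step profile `s₀(z) = 1` for `z < 0` and `s₀(z) = 0` for `z ≥ 0`. -/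
def stepProfile : ℝ → ℝ := fun z => if z < 0 then 1 else 0

/-- A profile is a measurable function `s : ℝ → [0,1]` with `s(z) → 1` as `z → −∞`
and `s(z) → 0` as `z → +∞`. -/
structure IsProfile (s : ℝ → ℝ) : Prop where
  meas : Measurable s
  mem_Icc : ∀ z, s z ∈ Set.Icc (0:ℝ) 1
  tendsto_atBot : Tendsto s atBot (nhds 1)
  tendsto_atTop : Tendsto s atTop (nhds 0)

/-- **Monotonization lemma.** Let F : [0,1] → [0,∞) be continuous and strictly concave with
F(0) = F(1) = 0 and unique maximizer ζ ∈ (0,1). If s is a profile which is non-increasing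
on (−∞,0) and on (0,∞), and s_monot(z) = max(s(z), ζ) for z < 0, min(s(z), ζ) for z > 0,
then ∫ F(s) dz ≤ ∫ F(s_monot) dz and ∫ (s_monot − s₀) z dz ≤ ∫ (s − s₀) z dz. -/
theorem monotonization_lemma
    (F : ℝ → ℝ) (hFcont : ContinuousOn F (Set.Icc 0 1))
    (hFconc : StrictConcaveOn ℝ (Set.Icc 0 1) F)
    (hF0 : F 0 = 0) (hF1 : F 1 = 0)
    (hFnn : ∀ x ∈ Set.Icc (0:ℝ) 1, 0 ≤ F x)
    (ζ : ℝ) (hζ : ζ ∈ Set.Ioo (0:ℝ) 1)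
    (hζmax : ∀ x ∈ Set.Icc (0:ℝ) 1, F x ≤ F ζ)
    (hζuniq : ∀ x ∈ Set.Icc (0:ℝ) 1, F x = F ζ → x = ζ)
    (s : ℝ → ℝ) (hs : IsProfile s)
    (hanti₁ : AntitoneOn s (Set.Iio 0)) (hanti₂ : AntitoneOn s (Set.Ioi 0))
    (smonot : ℝ → ℝ)
    (hsmonot : ∀ z : ℝ, smonot z = if z < 0 then max (s z) ζ else min (s z) ζ)
    (hint_s : Integrable (fun z => (s z - stepProfile z) * z) volume)
    (hint_m : Integrable (fun z => (smonot z - stepProfile z) * z) volume) :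
    (∫⁻ z : ℝ, ENNReal.ofReal (F (s z))) ≤ (∫⁻ z : ℝ, ENNReal.ofReal (F (smonot z)))
    ∧ (∫ z : ℝ, (smonot z - stepProfile z) * z) ≤ ∫ z : ℝ, (s z - stepProfile z) * z := by
  constructor
  · refine lintegral_mono fun z => ENNReal.ofReal_le_ofReal ?_
    rw [hsmonot z]
    split_ifs with h
    · rcases le_total (s z) ζ with h' | h'
      · rw [max_eq_right h']; exact hζmax _ (hs.mem_Icc z)
      · rw [max_eq_left h']
    · rcases le_total (s z) ζ with h' | h'
      · rw [min_eq_left h']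
      · rw [min_eq_right h']; exact hζmax _ (hs.mem_Icc z)
  · refine integral_mono hint_m hint_s fun z => ?_
    simp only [hsmonot z, stepProfile]
    rcases lt_trichotomy z 0 with h | h | h
    · simp only [if_pos h]
      have : s z - 1 ≤ max (s z) ζ - 1 := by
        have := le_max_left (s z) ζ; linarith
      exact mul_le_mul_of_nonpos_right this h.le
    · simp [h]
    · simp only [if_neg (not_lt.mpr h.le)]
      have : min (s z) ζ - 0 ≤ s z - 0 := by
        have := min_le_left (s z) ζ; linarith
      exact mul_le_mul_of_nonneg_right this h.le
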